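/- Von Neumann trace inequality specialization: for positive semidefinite operators A, B on a finite-dimensional Hilbert space of dimension n, max over unitaries U of Tr(A U B U*) equals Σᵢ aᵢ↓ bᵢ↓, where aᵢ↓ and bᵢ↓ are the eigenvalues of A and B in non-increasing order. -/

import Mathlib

open scoped BigOperators ComplexOrder

open Matrix Finset

private lemma vn_card {m k : ℕ} (hk : k < m) :
    ∑ i : Fin m, (if i.val ≤ k then (1:ℝ) else 0) = (k + 1 : ℕ) := by
  rw [← Finset.sum_filter]
  simp only [Finset.sum_const, nsmul_eq_mul, mul_one]
  norm_cast
  have : Finset.univ.filter (fun i : Fin m => i.val ≤ k) =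
      (Finset.range (k+1)).attachFin
        (fun n hn => lt_of_le_of_lt (Nat.lt_succ_iff.mp (Finset.mem_range.mp hn)) hk) := by
    ext i
    simp [Nat.lt_succ_iff]
  rw [this, Finset.card_attachFin, Finset.card_range]

private lemma vn_abel {m : ℕ} (f : Fin m → ℝ) (hf : Antitone f) (hf0 : ∀ i, 0 ≤ f i) :
    ∃ α : ℕ → ℝ, (∀ k, 0 ≤ α k) ∧
      ∀ i : Fin m, f i = ∑ k ∈ Finset.range m, if i.val ≤ k then α k else 0 := by
  set F : ℕ → ℝ := fun k => if h : k < m then f ⟨k, h⟩ else 0 with hF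
  refine ⟨fun k => F k - F (k+1), fun k => ?_, fun i => ?_⟩
  · simp only [hF]
    split_ifs with h1 h2
    · exact sub_nonneg.mpr (hf (by simp [Fin.le_def]))
    · simpa using hf0 ⟨k, h1⟩
    · omega
    · simp
  · have h1 : ∑ k ∈ Finset.range m, (if i.val ≤ k then F k - F (k+1) else 0)
        = ∑ k ∈ Finset.Ico i.val m, (F k - F (k+1)) := by
      rw [← Finset.sum_filter]
      congr 1
      ext k
      simp [Finset.mem_Ico, and_comm]
    rw [h1, Finset.sum_Ico_eq_sub _ (le_of_lt i.isLt), Finset.sum_range_sub' F,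
      Finset.sum_range_sub' F]
    have hFm : F m = 0 := by simp [hF]
    have hFi : F i.val = f i := by simp [hF, i.isLt]
    rw [hFm, hFi]
    ring

private lemma vn_S_le {m : ℕ} (d : Fin m → Fin m → ℝ) (hd0 : ∀ i j, 0 ≤ d i j)
    (hrow : ∀ i, ∑ j, d i j ≤ 1) (hcol : ∀ j, ∑ i, d i j ≤ 1) {k l : ℕ} (hk : k < m) (hl : l < m) :
    ∑ i : Fin m, ∑ j : Fin m,
        (if i.val ≤ k then (1:ℝ) else 0) * (if j.val ≤ l then (1:ℝ) else 0) * d i j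
      ≤ ((min k l + 1 : ℕ) : ℝ) := by
  rcases le_total k l with h | h
  · have hi : ∀ i : Fin m, ∑ j : Fin m, (if j.val ≤ l then (1:ℝ) else 0) * d i j ≤ 1 := by
      intro i
      refine le_trans (Finset.sum_le_sum (fun j _ => ?_)) (hrow i)
      split_ifs <;> simp [hd0 i j]
    have e1 : ∑ i : Fin m, ∑ j : Fin m,
        (if i.val ≤ k then (1:ℝ) else 0) * (if j.val ≤ l then (1:ℝ) else 0) * d i j
        = ∑ i : Fin m, (if i.val ≤ k then (1:ℝ) else 0) *
            ∑ j : Fin m, (if j.val ≤ l then (1:ℝ) else 0) * d i j := by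
      simp only [Finset.mul_sum, mul_assoc]
    rw [e1]
    calc ∑ i : Fin m, (if i.val ≤ k then (1:ℝ) else 0) *
            ∑ j : Fin m, (if j.val ≤ l then (1:ℝ) else 0) * d i j
        ≤ ∑ i : Fin m, (if i.val ≤ k then (1:ℝ) else 0) * 1 :=
          Finset.sum_le_sum fun i _ => mul_le_mul_of_nonneg_left (hi i) (by positivity)
      _ = ((k + 1 : ℕ) : ℝ) := by simpa using vn_card hk
      _ ≤ ((min k l + 1 : ℕ) : ℝ) := by rw [min_eq_left h]
  · have hj : ∀ j : Fin m, ∑ i : Fin m, (if i.val ≤ k then (1:ℝ) else 0) * d i j ≤ 1 := by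
      intro j
      refine le_trans (Finset.sum_le_sum (fun i _ => ?_)) (hcol j)
      split_ifs <;> simp [hd0 i j]
    have e1 : ∑ i : Fin m, ∑ j : Fin m,
        (if i.val ≤ k then (1:ℝ) else 0) * (if j.val ≤ l then (1:ℝ) else 0) * d i j
        = ∑ j : Fin m, (if j.val ≤ l then (1:ℝ) else 0) *
            ∑ i : Fin m, (if i.val ≤ k then (1:ℝ) else 0) * d i j := by
      rw [Finset.sum_comm]
      simp only [Finset.mul_sum]
      exact Finset.sum_congr rfl fun j _ => Finset.sum_congr rfl fun i _ => by ring
    rw [e1]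
    calc ∑ j : Fin m, (if j.val ≤ l then (1:ℝ) else 0) *
            ∑ i : Fin m, (if i.val ≤ k then (1:ℝ) else 0) * d i j
        ≤ ∑ j : Fin m, (if j.val ≤ l then (1:ℝ) else 0) * 1 :=
          Finset.sum_le_sum fun j _ => mul_le_mul_of_nonneg_left (hj j) (by positivity)
      _ = ((l + 1 : ℕ) : ℝ) := by simpa using vn_card hl
      _ ≤ ((min k l + 1 : ℕ) : ℝ) := by rw [min_eq_right h]

private lemma vn_ds {m : ℕ} (f g : Fin m → ℝ) (hf : Antitone f) (hg : Antitone g)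
    (hf0 : ∀ i, 0 ≤ f i) (hg0 : ∀ i, 0 ≤ g i)
    (d : Fin m → Fin m → ℝ) (hd0 : ∀ i j, 0 ≤ d i j)
    (hrow : ∀ i, ∑ j, d i j ≤ 1) (hcol : ∀ j, ∑ i, d i j ≤ 1) :
    ∑ i, ∑ j, f i * g j * d i j ≤ ∑ i, f i * g i := by
  obtain ⟨α, hα0, hα⟩ := vn_abel f hf hf0
  obtain ⟨β, hβ0, hβ⟩ := vn_abel g hg hg0
  have swap4 : ∀ (t : Fin m → Fin m → ℕ → ℕ → ℝ),
      (∑ i : Fin m, ∑ j : Fin m, ∑ k ∈ range m, ∑ l ∈ range m, t i j k l)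
        = ∑ k ∈ range m, ∑ l ∈ range m, ∑ i : Fin m, ∑ j : Fin m, t i j k l := by
    intro t
    calc (∑ i : Fin m, ∑ j : Fin m, ∑ k ∈ range m, ∑ l ∈ range m, t i j k l)
        = ∑ i : Fin m, ∑ k ∈ range m, ∑ j : Fin m, ∑ l ∈ range m, t i j k l :=
          Finset.sum_congr rfl fun i _ => Finset.sum_comm
      _ = ∑ k ∈ range m, ∑ i : Fin m, ∑ j : Fin m, ∑ l ∈ range m, t i j k l :=
          Finset.sum_comm
      _ = ∑ k ∈ range m, ∑ i : Fin m, ∑ l ∈ range m, ∑ j : Fin m, t i j k l :=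
          Finset.sum_congr rfl fun k _ => Finset.sum_congr rfl fun i _ => Finset.sum_comm
      _ = ∑ k ∈ range m, ∑ l ∈ range m, ∑ i : Fin m, ∑ j : Fin m, t i j k l :=
          Finset.sum_congr rfl fun k _ => Finset.sum_comm
  have lhs_eq : ∑ i, ∑ j, f i * g j * d i j
      = ∑ k ∈ range m, ∑ l ∈ range m, α k * β l *
          (∑ i : Fin m, ∑ j : Fin m,
            (if i.val ≤ k then (1:ℝ) else 0) * (if j.val ≤ l then (1:ℝ) else 0) * d i j) := by
    have expand : ∀ (i j : Fin m), f i * g j * d i j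
        = ∑ k ∈ range m, ∑ l ∈ range m,
            α k * β l *
              ((if i.val ≤ k then (1:ℝ) else 0) * (if j.val ≤ l then (1:ℝ) else 0) * d i j) := by
      intro i j
      rw [hα i, hβ j, Finset.sum_mul_sum, Finset.sum_mul]
      refine Finset.sum_congr rfl fun k _ => ?_
      rw [Finset.sum_mul]
      refine Finset.sum_congr rfl fun l _ => ?_
      split_ifs <;> ring
    simp only [expand]
    rw [swap4]
    refine Finset.sum_congr rfl fun k _ => Finset.sum_congr rfl fun l _ => ?_
    simp only [← Finset.mul_sum]
  have rhs_eq : ∑ i, f i * g i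
      = ∑ k ∈ range m, ∑ l ∈ range m, α k * β l * ((min k l + 1 : ℕ) : ℝ) := by
    have expand : ∀ (i : Fin m), f i * g i
        = ∑ k ∈ range m, ∑ l ∈ range m,
            α k * β l * ((if i.val ≤ k then (1:ℝ) else 0) * (if i.val ≤ l then (1:ℝ) else 0)) := by
      intro i
      rw [hα i, hβ i, Finset.sum_mul_sum]
      refine Finset.sum_congr rfl fun k _ => Finset.sum_congr rfl fun l _ => ?_
      split_ifs <;> ring
    rw [Finset.sum_congr rfl fun i _ => expand i]
    have swap3 : (∑ i : Fin m, ∑ k ∈ range m, ∑ l ∈ range m,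
        α k * β l * ((if i.val ≤ k then (1:ℝ) else 0) * (if i.val ≤ l then (1:ℝ) else 0)))
        = ∑ k ∈ range m, ∑ l ∈ range m, ∑ i : Fin m,
            α k * β l * ((if i.val ≤ k then (1:ℝ) else 0) * (if i.val ≤ l then (1:ℝ) else 0)) := by
      rw [Finset.sum_comm]
      exact Finset.sum_congr rfl fun k _ => Finset.sum_comm
    rw [swap3]
    refine Finset.sum_congr rfl fun k hk => Finset.sum_congr rfl fun l hl => ?_
    rw [← Finset.mul_sum]
    congr 1
    have h2 : ∀ i : Fin m, (if i.val ≤ k then (1:ℝ) else 0) * (if i.val ≤ l then (1:ℝ) else 0)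
        = (if i.val ≤ min k l then (1:ℝ) else 0) := by
      intro i
      by_cases h1 : i.val ≤ k <;> by_cases h3 : i.val ≤ l <;>
        simp [h1, h3, le_min_iff]
    rw [Finset.sum_congr rfl fun i _ => h2 i]
    exact vn_card (lt_of_le_of_lt (min_le_left _ _) (Finset.mem_range.mp hk))
  rw [lhs_eq, rhs_eq]
  refine Finset.sum_le_sum fun k hk => Finset.sum_le_sum fun l hl => ?_
  exact mul_le_mul_of_nonneg_left
    (vn_S_le d hd0 hrow hcol (Finset.mem_range.mp hk) (Finset.mem_range.mp hl))
    (mul_nonneg (hα0 k) (hβ0 l))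

private lemma vn_trace_diag {m : ℕ} (a b : Fin m → ℝ) (V : Matrix (Fin m) (Fin m) ℂ) :
    (Matrix.diagonal ((RCLike.ofReal : ℝ → ℂ) ∘ a) * V *
        Matrix.diagonal ((RCLike.ofReal : ℝ → ℂ) ∘ b) * star V).trace
      = ((∑ i, ∑ j, a i * b j * Complex.normSq (V i j) : ℝ) : ℂ) := by
  rw [show (RCLike.ofReal : ℝ → ℂ) = Complex.ofReal from rfl]
  have hM : ∀ i j : Fin m,
      (Matrix.diagonal (Complex.ofReal ∘ a) * V * Matrix.diagonal (Complex.ofReal ∘ b)) i j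
        = (a i : ℂ) * V i j * (b j : ℂ) := by
    intro i j
    rw [Matrix.mul_diagonal, Matrix.diagonal_mul]
    rfl
  rw [Matrix.trace]
  push_cast
  refine Finset.sum_congr rfl fun i _ => ?_
  rw [Matrix.diag_apply, Matrix.mul_apply]
  refine Finset.sum_congr rfl fun j _ => ?_
  rw [hM, Matrix.star_apply]
  calc (a i:ℂ) * V i j * (b j:ℂ) * star (V i j)
      = (a i:ℂ) * ((b j:ℂ) * (V i j * star (V i j))) := by ring
    _ = (a i:ℂ) * ((b j:ℂ) * (Complex.normSq (V i j) : ℂ)) := by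
        rw [RCLike.star_def, Complex.mul_conj]
    _ = _ := by ring

private lemma vn_conj_trace {m : ℕ} (A B U P Q : Matrix (Fin m) (Fin m) ℂ)
    (hP : P * star P = 1) (hQ : Q * star Q = 1) :
    (A * U * B * star U).trace
      = ((star P * A * P) * (star P * U * Q) * (star Q * B * Q) * star (star P * U * Q)).trace := by
  have cP : ∀ X : Matrix (Fin m) (Fin m) ℂ, P * (star P * X) = X := fun X => by
    rw [← Matrix.mul_assoc, hP, Matrix.one_mul]
  have cQ : ∀ X : Matrix (Fin m) (Fin m) ℂ, Q * (star Q * X) = X := fun X => by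
    rw [← Matrix.mul_assoc, hQ, Matrix.one_mul]
  rw [Matrix.star_mul, Matrix.star_mul, star_star]
  simp only [Matrix.mul_assoc, cP, cQ]
  rw [Matrix.trace_mul_comm (star P)]
  simp only [Matrix.mul_assoc, cP, hP, Matrix.mul_one]

private lemma vn_row {m : ℕ} {V : Matrix (Fin m) (Fin m) ℂ}
    (hV : V ∈ Matrix.unitaryGroup (Fin m) ℂ) (i : Fin m) :
    ∑ j, Complex.normSq (V i j) = 1 := by
  have h := Matrix.mem_unitaryGroup_iff.mp hV
  have h2 := congrFun (congrFun h i) i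
  rw [Matrix.mul_apply] at h2
  simp only [Matrix.star_apply, Matrix.one_apply_eq] at h2
  have : ∀ j, V i j * star (V i j) = ((Complex.normSq (V i j) : ℝ) : ℂ) := fun j => by
    rw [RCLike.star_def, Complex.mul_conj]
  rw [Finset.sum_congr rfl fun j _ => this j] at h2
  exact_mod_cast h2

private lemma vn_col {m : ℕ} {V : Matrix (Fin m) (Fin m) ℂ}
    (hV : V ∈ Matrix.unitaryGroup (Fin m) ℂ) (j : Fin m) :
    ∑ i, Complex.normSq (V i j) = 1 := by
  have h := Matrix.mem_unitaryGroup_iff'.mp hV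
  have h2 := congrFun (congrFun h j) j
  rw [Matrix.mul_apply] at h2
  simp only [Matrix.star_apply, Matrix.one_apply_eq] at h2
  have : ∀ i, star (V i j) * V i j = ((Complex.normSq (V i j) : ℝ) : ℂ) := fun i => by
    rw [RCLike.star_def, mul_comm, Complex.mul_conj]
  rw [Finset.sum_congr rfl fun i _ => this i] at h2
  exact_mod_cast h2

private lemma vn_perm_unitary {m : ℕ} (π : Equiv.Perm (Fin m)) :
    (Matrix.of fun i j => if i = π j then (1:ℂ) else 0) ∈ Matrix.unitaryGroup (Fin m) ℂ := by
  rw [Matrix.mem_unitaryGroup_iff]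
  ext i i'
  rw [Matrix.mul_apply]
  have h : ∀ j : Fin m,
      (Matrix.of fun i j => if i = π j then (1:ℂ) else 0) i j *
        (star (Matrix.of fun i j => if i = π j then (1:ℂ) else 0)) j i'
      = if j = π.symm i then (if i' = i then (1:ℂ) else 0) else 0 := by
    intro j
    rw [Matrix.star_apply]
    simp only [Matrix.of_apply]
    by_cases h1 : i = π j
    · have hj : j = π.symm i := by rw [h1, Equiv.symm_apply_apply]
      rw [if_pos h1, if_pos hj, one_mul]
      by_cases h2 : i' = π j
      · rw [if_pos h2, if_pos (h2.trans h1.symm)]; simp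
      · rw [if_neg h2, if_neg (fun hc : i' = i => h2 (hc.trans h1))]; simp
    · have hj : j ≠ π.symm i := fun hc => h1 (by rw [hc, Equiv.apply_symm_apply])
      rw [if_neg h1, if_neg hj, zero_mul]
  rw [Finset.sum_congr rfl fun j _ => h j, Finset.sum_ite_eq' Finset.univ (π.symm i)]
  simp [Matrix.one_apply, eq_comm]

/-- Von Neumann trace inequality for positive semidefinite matrices: the maximum of
`Tr(A U B U*)` over unitaries `U` is the sum of products of the eigenvalues of `A`
and `B` arranged in non-increasing order. -/
theorem stmt10 {m : ℕ} (A B : Matrix (Fin m) (Fin m) ℂ)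
    (hA : A.PosSemidef) (hB : B.PosSemidef) :
    letI aSorted : Fin m → ℝ :=
      fun i => (hA.1.eigenvalues ∘ Tuple.sort hA.1.eigenvalues) i.rev
    letI bSorted : Fin m → ℝ :=
      fun i => (hB.1.eigenvalues ∘ Tuple.sort hB.1.eigenvalues) i.rev
    IsGreatest
      {x : ℝ | ∃ U ∈ Matrix.unitaryGroup (Fin m) ℂ,
        x = (A * U * B * star U).trace.re}
      (∑ i, aSorted i * bSorted i) := by
  classical
  set aSorted : Fin m → ℝ :=
    fun i => (hA.1.eigenvalues ∘ Tuple.sort hA.1.eigenvalues) i.rev with haSdef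
  set bSorted : Fin m → ℝ :=
    fun i => (hB.1.eigenvalues ∘ Tuple.sort hB.1.eigenvalues) i.rev with hbSdef
  set a : Fin m → ℝ := hA.1.eigenvalues with ha
  set b : Fin m → ℝ := hB.1.eigenvalues with hb
  set eA : Equiv.Perm (Fin m) := Fin.revPerm.trans (Tuple.sort a) with heA
  set eB : Equiv.Perm (Fin m) := Fin.revPerm.trans (Tuple.sort b) with heB
  have haS : ∀ k : Fin m, aSorted k = a (eA k) := fun k => rfl
  have hbS : ∀ k : Fin m, bSorted k = b (eB k) := fun k => rfl
  have hAmono : Antitone aSorted := by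
    intro k l hkl
    rw [haS, haS]
    exact Tuple.monotone_sort a (Fin.rev_le_rev.mpr hkl)
  have hBmono : Antitone bSorted := by
    intro k l hkl
    rw [hbS, hbS]
    exact Tuple.monotone_sort b (Fin.rev_le_rev.mpr hkl)
  have hA0 : ∀ i, 0 ≤ aSorted i := fun i => hA.eigenvalues_nonneg _
  have hB0 : ∀ i, 0 ≤ bSorted i := fun i => hB.eigenvalues_nonneg _
  set P : Matrix (Fin m) (Fin m) ℂ := (hA.1.eigenvectorUnitary : Matrix (Fin m) (Fin m) ℂ) with hPdef
  set Q : Matrix (Fin m) (Fin m) ℂ := (hB.1.eigenvectorUnitary : Matrix (Fin m) (Fin m) ℂ) with hQdef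
  have hPmem : P ∈ Matrix.unitaryGroup (Fin m) ℂ := hA.1.eigenvectorUnitary.2
  have hQmem : Q ∈ Matrix.unitaryGroup (Fin m) ℂ := hB.1.eigenvectorUnitary.2
  have hP : P * star P = 1 := Matrix.mem_unitaryGroup_iff.mp hPmem
  have hP' : star P * P = 1 := Matrix.mem_unitaryGroup_iff'.mp hPmem
  have hQ : Q * star Q = 1 := Matrix.mem_unitaryGroup_iff.mp hQmem
  have hQ' : star Q * Q = 1 := Matrix.mem_unitaryGroup_iff'.mp hQmem
  have hAspec : star P * A * P = Matrix.diagonal ((RCLike.ofReal : ℝ → ℂ) ∘ a) :=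
    by have h := Matrix.IsHermitian.conjStarAlgAut_star_eigenvectorUnitary hA.1; rw [Unitary.conjStarAlgAut_star_apply] at h; exact h
  have hBspec : star Q * B * Q = Matrix.diagonal ((RCLike.ofReal : ℝ → ℂ) ∘ b) :=
    by have h := Matrix.IsHermitian.conjStarAlgAut_star_eigenvectorUnitary hB.1; rw [Unitary.conjStarAlgAut_star_apply] at h; exact h
  have key : ∀ U : Matrix (Fin m) (Fin m) ℂ,
      (A * U * B * star U).trace.re
        = ∑ i, ∑ j, a i * b j * Complex.normSq ((star P * U * Q) i j) := by
    intro U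
    rw [vn_conj_trace A B U P Q hP hQ, hAspec, hBspec, vn_trace_diag, Complex.ofReal_re]
  constructor
  · -- membership: a permutation "matching" unitary achieves the value
    set π : Equiv.Perm (Fin m) := eB.symm.trans eA with hπ
    set Vp : Matrix (Fin m) (Fin m) ℂ := Matrix.of fun i j => if i = π j then (1:ℂ) else 0
      with hVpdef
    have hVpmem := vn_perm_unitary π
    refine ⟨P * Vp * star Q, mul_mem (mul_mem hPmem hVpmem) (Unitary.star_mem hQmem), ?_⟩
    rw [key (P * Vp * star Q)]
    have hV : star P * (P * Vp * star Q) * Q = Vp := by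
      simp only [Matrix.mul_assoc, hQ', Matrix.mul_one]
      rw [← Matrix.mul_assoc, hP', Matrix.one_mul]
    rw [hV]
    have hVpe : ∀ i j, Complex.normSq (Vp i j) = if i = π j then 1 else 0 := by
      intro i j
      rw [hVpdef]
      simp only [Matrix.of_apply, apply_ite Complex.normSq, Complex.normSq_one, map_zero]
    have s1 : (∑ i, ∑ j, a i * b j * Complex.normSq (Vp i j)) = ∑ j, a (π j) * b j := by
      rw [Finset.sum_comm]
      refine Finset.sum_congr rfl fun j _ => ?_
      have h3 : ∀ i, a i * b j * Complex.normSq (Vp i j)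
          = if i = π j then a i * b j else 0 := fun i => by
        rw [hVpe]
        split_ifs <;> simp
      rw [Finset.sum_congr rfl fun i _ => h3 i, Finset.sum_ite_eq' Finset.univ (π j)]
      simp
    have s2 : (∑ k, aSorted k * bSorted k) = ∑ j, a (π j) * b j := by
      refine Fintype.sum_equiv eB _ _ fun k => ?_
      rw [haS, hbS]
      have : π (eB k) = eA k := by
        rw [hπ]
        simp
      rw [this]
    rw [s1, ← s2]
  · -- upper bound
    rintro x ⟨U, hU, rfl⟩
    rw [key U]
    set V : Matrix (Fin m) (Fin m) ℂ := star P * U * Q with hVdef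
    have hVmem : V ∈ Matrix.unitaryGroup (Fin m) ℂ :=
      mul_mem (mul_mem (Unitary.star_mem hPmem) hU) hQmem
    have hre : (∑ i, ∑ j, a i * b j * Complex.normSq (V i j))
        = ∑ k, ∑ l, aSorted k * bSorted l * Complex.normSq (V (eA k) (eB l)) := by
      refine (Fintype.sum_equiv eA _ _ fun k => ?_).symm
      refine Fintype.sum_equiv eB _ _ fun l => ?_
      rw [haS, hbS]
    rw [hre]
    refine vn_ds aSorted bSorted hAmono hBmono hA0 hB0
      (fun k l => Complex.normSq (V (eA k) (eB l))) (fun k l => Complex.normSq_nonneg _)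
      (fun k => le_of_eq ?_) (fun l => le_of_eq ?_)
    · rw [Fintype.sum_equiv eB (fun l => Complex.normSq (V (eA k) (eB l)))
        (fun j => Complex.normSq (V (eA k) j)) (fun l => rfl)]
      exact vn_row hVmem (eA k)
    · rw [Fintype.sum_equiv eA (fun k => Complex.normSq (V (eA k) (eB l)))
        (fun i => Complex.normSq (V i (eB l))) (fun k => rfl)]
      exact vn_col hVmem (eB l)
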